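/- For every n ≥ 1 there exists a family of 2n−2 matchings, each of size n, in a bipartite graph, that has no rainbow matching of size n. Concretely, taking n−1 copies of one perfect matching of the cycle C_{2n} and n−1 copies of the other perfect matching gives such a family. -/
import Mathlib


variable {V : Type*}

/-- A matching: a set of non-loop edges that are pairwise vertex-disjoint. -/
def IsMatching (M : Set (Sym2 V)) : Prop :=
  (∀ e ∈ M, ¬ e.IsDiag) ∧ ∀ e ∈ M, ∀ f ∈ M, e ≠ f → ∀ v, v ∈ e → v ∉ f

/-- A vertex is covered by an edge set if it belongs to some edge. -/
def covered (M : Set (Sym2 V)) (v : V) : Prop := ∃ e ∈ M, v ∈ e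

/-- A `K`–`F`-alternating path: a (simple) nonempty list of vertices whose
odd-numbered edges (0-indexed: even positions) lie in `K` and even-numbered edges lie in `F`. -/
def AltPath (K F : Set (Sym2 V)) (p : List V) : Prop :=
  p ≠ [] ∧ p.Nodup ∧ ∀ i, ∀ h : i + 1 < p.length,
    s(p[i]'(Nat.lt_of_succ_lt h), p[i+1]'h) ∈ (if i % 2 = 0 then K else F)

/-- A rainbow matching of size `n` for a family `M` of edge sets: `n` edges, one from each of
`n` distinct members, forming a matching. -/
def HasRainbow {V : Type*} [DecidableEq V] {m : ℕ} (n : ℕ) (M : Fin m → Finset (Sym2 V)) : Prop :=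
  ∃ (f : Fin n → Fin m) (e : Fin n → Sym2 V),
    Function.Injective f ∧ (∀ j, e j ∈ M (f j)) ∧ Function.Injective e ∧
    IsMatching ((Finset.image e Finset.univ : Finset (Sym2 V)) : Set (Sym2 V))


/-- The edge set of the cycle on the `n` vertices `ZMod n` (vertices in cyclic order). -/
def cycleEdges (n : ℕ) : Finset (Sym2 (ZMod n)) :=
  (Finset.range n).image fun i : ℕ => s((i : ZMod n), (i : ZMod n) + 1)


namespace Stmt3Aux

/-- Reduction mod 2. -/
def φ (n : ℕ) : ZMod (2*n) →+* ZMod 2 := ZMod.castHom ⟨n, rfl⟩ (ZMod 2)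

lemma cast_parity (n x y : ℕ) (h : (x : ZMod (2*n)) = y) : x % 2 = y % 2 := by
  have h2 := congrArg (φ n) h
  simp only [map_natCast] at h2
  exact (ZMod.natCast_eq_natCast_iff x y 2).mp h2

lemma cast_inj (n x y : ℕ) (hx : x < 2*n) (hy : y < 2*n) (h : (x : ZMod (2*n)) = y) : x = y := by
  haveI : NeZero (2*n) := ⟨by omega⟩
  have h2 := congrArg ZMod.val h
  rwa [ZMod.val_cast_of_lt hx, ZMod.val_cast_of_lt hy] at h2

lemma two_ne_zero' (n : ℕ) (hn : 2 ≤ n) : (2 : ZMod (2*n)) ≠ 0 := by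
  have h : ((2:ℕ) : ZMod (2*n)) ≠ 0 := by
    intro hd
    rw [ZMod.natCast_eq_zero_iff] at hd
    have := Nat.le_of_dvd (by norm_num) hd
    omega
  simpa using h

lemma one_ne_zero' (n : ℕ) (hn : 2 ≤ n) : (1 : ZMod (2*n)) ≠ 0 := by
  haveI : Fact (1 < 2*n) := ⟨by omega⟩
  exact one_ne_zero

lemma start_inj (n : ℕ) (hn : 2 ≤ n) {u v : ZMod (2*n)} (h : s(u, u+1) = s(v, v+1)) : u = v := by
  rw [Sym2.eq_iff] at h
  rcases h with ⟨h1, _⟩ | ⟨h1, h2⟩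
  · exact h1
  · exfalso
    exact two_ne_zero' n hn (by linear_combination h2 - h1)

def shiftM (n a : ℕ) : Finset (Sym2 (ZMod (2*n))) :=
  (Finset.range n).image fun i => s(((2*i+a : ℕ) : ZMod (2*n)), ((2*i+a : ℕ) : ZMod (2*n)) + 1)

lemma mem_shiftM {n a : ℕ} {e : Sym2 (ZMod (2*n))} :
    e ∈ shiftM n a ↔ ∃ i < n, e = s(((2*i+a : ℕ) : ZMod (2*n)), ((2*i+a : ℕ) : ZMod (2*n)) + 1) := by
  simp [shiftM, eq_comm]

lemma shiftM_card (n a : ℕ) (hn : 2 ≤ n) (ha : a ≤ 1) : (shiftM n a).card = n := by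
  rw [shiftM, Finset.card_image_of_injOn, Finset.card_range]
  intro i hi j hj h
  rw [Finset.mem_coe, Finset.mem_range] at hi hj
  have h2 := start_inj n hn h
  have h3 := cast_inj n _ _ (by omega) (by omega) h2
  omega

lemma shiftM_subset (n a : ℕ) (ha : a ≤ 1) (hn : 1 ≤ n) : shiftM n a ⊆ cycleEdges (2*n) := by
  intro e he
  rw [mem_shiftM] at he
  obtain ⟨i, hi, rfl⟩ := he
  simp only [cycleEdges, Finset.mem_image, Finset.mem_range]
  exact ⟨2*i+a, by omega, rfl⟩

lemma shiftM_matching (n a : ℕ) (hn : 2 ≤ n) (ha : a ≤ 1) :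
    IsMatching ((shiftM n a : Finset (Sym2 (ZMod (2*n)))) : Set (Sym2 (ZMod (2*n)))) := by
  constructor
  · intro e he
    rw [Finset.mem_coe, mem_shiftM] at he
    obtain ⟨i, hi, rfl⟩ := he
    rw [Sym2.mk_isDiag_iff]
    intro h
    apply one_ne_zero' n hn
    have h3 : ((2*i+a:ℕ) : ZMod (2*n)) + 1 = ((2*i+a:ℕ) : ZMod (2*n)) + 0 := by
      rw [add_zero]; exact h.symm
    exact add_left_cancel h3
  · intro e he f hf hne v hv hvf
    rw [Finset.mem_coe, mem_shiftM] at he hf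
    obtain ⟨i, hi, rfl⟩ := he
    obtain ⟨j, hj, rfl⟩ := hf
    have hij : i ≠ j := by
      intro h; exact hne (by rw [h])
    have hcast : ∀ k : ℕ, ((k : ℕ) : ZMod (2*n)) + 1 = ((k+1 : ℕ) : ZMod (2*n)) := by
      intro k; push_cast; ring
    rw [Sym2.mem_iff] at hv hvf
    rcases hv with rfl | h0
    · rcases hvf with h | h
      · exact hij (by have := cast_inj n _ _ (by omega) (by omega) h; omega)
      · rw [hcast] at h
        have := cast_parity n _ _ h
        omega
    · rcases hvf with h | h
      · rw [h0, hcast] at h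
        have := cast_parity n _ _ h
        omega
      · rw [h0] at h
        have h' := add_right_cancel h
        have := cast_inj n _ _ (by omega) (by omega) h'
        omega

end Stmt3Aux

open Stmt3Aux in
/-- for every `n ≥ 1` there is a family of `2n−2` matchings of size `n` in a
bipartite graph (matchings of the cycle `C_{2n}`) with no rainbow matching of size `n`. -/
theorem stmt_3 (n : ℕ) (hn : 1 ≤ n) :
    ∃ M : Fin (2 * n - 2) → Finset (Sym2 (ZMod (2 * n))),
      (∀ i, IsMatching ((M i : Finset (Sym2 (ZMod (2 * n)))) : Set (Sym2 (ZMod (2 * n)))) ∧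
        (M i).card = n ∧ M i ⊆ cycleEdges (2 * n)) ∧
      (∃ c : ZMod (2 * n) → Bool, ∀ i, ∀ e ∈ M i, ∀ u v, e = s(u, v) → c u ≠ c v) ∧
      ¬ HasRainbow n M := by
  by_cases h1 : n = 1
  · subst h1
    refine ⟨fun i => (i : Fin 0).elim0, fun i => (i : Fin 0).elim0,
      ⟨fun _ => true, fun i => (i : Fin 0).elim0⟩, ?_⟩
    rintro ⟨f, e, -⟩
    exact ((f 0 : Fin 0)).elim0
  · have hn2 : 2 ≤ n := by omega
    haveI : NeZero (2*n) := ⟨by omega⟩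
    refine ⟨fun i => if (i : ℕ) < n - 1 then shiftM n 0 else shiftM n 1, ?_, ?_, ?_⟩
    · intro i
      by_cases h : (i : ℕ) < n - 1 <;> simp only [h, if_true, if_false] <;>
        exact ⟨shiftM_matching n _ hn2 (by omega), shiftM_card n _ hn2 (by omega),
          shiftM_subset n _ (by omega) (by omega)⟩
    · refine ⟨fun v => decide (φ n v = 0), ?_⟩
      intro i e he u v huv
      have hmem : ∃ a ≤ 1, e ∈ shiftM n a := by
        by_cases h : (i : ℕ) < n - 1
        · exact ⟨0, by omega, by simpa [h] using he⟩
        · exact ⟨1, by omega, by simpa [h] using he⟩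
      obtain ⟨a, ha, hmem⟩ := hmem
      rw [mem_shiftM] at hmem
      obtain ⟨k, hk, hek⟩ := hmem
      rw [huv, Sym2.eq_iff] at hek
      have hkey : ∀ w : ZMod (2*n), decide (φ n w = 0) ≠ decide (φ n (w+1) = 0) := by
        intro w
        rw [map_add, map_one]
        have : ∀ x : ZMod 2, decide (x = 0) ≠ decide (x + 1 = 0) := by decide
        exact this _
      rcases hek with ⟨rfl, rfl⟩ | ⟨rfl, rfl⟩
      · exact hkey _
      · exact (hkey _).symm
    · rintro ⟨f, e, finj, hmem, einj, hmatch⟩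
      set S : Finset (Sym2 (ZMod (2*n))) := Finset.image e Finset.univ with hS
      have hScard : S.card = n := by
        rw [hS, Finset.card_image_of_injective _ einj, Finset.card_univ, Fintype.card_fin]
      have hside : ∀ j : Fin n, ∃ a ≤ 1, e j ∈ shiftM n a := by
        intro j
        by_cases h : ((f j : ℕ) < n - 1)
        · exact ⟨0, by omega, by have := hmem j; simpa [h] using this⟩
        · exact ⟨1, by omega, by have := hmem j; simpa [h] using this⟩
      set A : Finset (ZMod (2*n)) := Finset.univ.filter (fun v => s(v, v+1) ∈ S) with hA
      have hmemA : ∀ v, v ∈ A ↔ s(v, v+1) ∈ S := by intro v; simp [hA]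
      have hSA : S = A.image (fun v => s(v, v+1)) := by
        apply Finset.Subset.antisymm
        · intro x hx
          rw [hS, Finset.mem_image] at hx
          obtain ⟨j, -, rfl⟩ := hx
          obtain ⟨a, ha, hj⟩ := hside j
          rw [mem_shiftM] at hj
          obtain ⟨k, hk, hek⟩ := hj
          rw [Finset.mem_image]
          refine ⟨((2*k+a : ℕ) : ZMod (2*n)), ?_, hek.symm⟩
          rw [hmemA, ← hek, hS]
          exact Finset.mem_image_of_mem e (Finset.mem_univ j)
        · intro x hx
          rw [Finset.mem_image] at hx
          obtain ⟨v, hv, rfl⟩ := hx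
          exact (hmemA v).mp hv
      have hAcard : A.card = n := by
        have h2 : (A.image (fun v => s(v, v+1))).card = A.card :=
          Finset.card_image_of_injOn (fun u _ v _ h => start_inj n hn2 h)
        rw [← hSA, hScard] at h2
        exact h2.symm
      have hadd1 : ∀ v : ZMod (2*n), v + 1 + 1 = v + 2 := by intro v; ring
      have hA1 : ∀ v ∈ A, v + 1 ∉ A := by
        intro v hv hv1
        have h1 : s(v, v+1) ∈ S := (hmemA v).mp hv
        have h2 : s(v+1, v+1+1) ∈ S := (hmemA _).mp hv1
        have hne : s(v, v+1) ≠ s(v+1, v+1+1) := by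
          intro h
          have h3 := start_inj n hn2 h
          exact one_ne_zero' n hn2 (by linear_combination -h3)
        exact hmatch.2 _ (Finset.mem_coe.mpr h1) _ (Finset.mem_coe.mpr h2) hne (v+1)
          (Sym2.mem_mk_right _ _) (Sym2.mem_mk_left _ _)
      have hdisj : Disjoint A (A.image (· + 1)) := by
        rw [Finset.disjoint_left]
        intro w hw hw'
        rw [Finset.mem_image] at hw'
        obtain ⟨v, hv, rfl⟩ := hw'
        exact hA1 v hv hw
      have huniv : ∀ v : ZMod (2*n), v ∈ A ∪ A.image (· + 1) := by
        have hcardim : (A.image (· + 1)).card = n := by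
          rw [Finset.card_image_of_injective _ (add_left_injective 1), hAcard]
        have hc : (A ∪ A.image (· + 1)).card = Fintype.card (ZMod (2*n)) := by
          rw [Finset.card_union_of_disjoint hdisj, hAcard, hcardim, ZMod.card]
          ring
        have := Finset.eq_univ_of_card _ hc
        intro v; rw [this]; exact Finset.mem_univ v
      have hA2 : ∀ v, v ∉ A → v + 1 ∈ A := by
        intro v hv
        rcases Finset.mem_union.mp (huniv (v+1)) with h | h
        · exact h
        · rw [Finset.mem_image] at h
          obtain ⟨w, hw, hww⟩ := h
          have : w = v := add_right_cancel hww
          exact absurd (this ▸ hw) hv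
      have hstep : ∀ v ∈ A, v + 2 ∈ A := by
        intro v hv
        have h2 := hA2 (v+1) (hA1 v hv)
        rwa [hadd1] at h2
      obtain ⟨u, hu⟩ : ∃ u, u ∈ A := by
        obtain ⟨u, hu⟩ := Finset.card_pos.mp (by rw [hAcard]; omega)
        exact ⟨u, hu⟩
      have hiter : ∀ k : ℕ, u + ((2*k : ℕ) : ZMod (2*n)) ∈ A := by
        intro k
        induction k with
        | zero => simpa using hu
        | succ k ih =>
          have h2 := hstep _ ih
          have he : u + ((2*k : ℕ) : ZMod (2*n)) + 2 = u + ((2*(k+1) : ℕ) : ZMod (2*n)) := by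
            push_cast; ring
          rwa [he] at h2
      have hA' : A = (Finset.range n).image (fun k => u + ((2*k : ℕ) : ZMod (2*n))) := by
        have hsub : (Finset.range n).image (fun k => u + ((2*k : ℕ) : ZMod (2*n))) ⊆ A := by
          intro x hx
          rw [Finset.mem_image] at hx
          obtain ⟨k, -, rfl⟩ := hx
          exact hiter k
        have hcard : ((Finset.range n).image (fun k => u + ((2*k : ℕ) : ZMod (2*n)))).card = n := by
          rw [Finset.card_image_of_injOn, Finset.card_range]
          intro i hi j hj h
          rw [Finset.mem_coe, Finset.mem_range] at hi hj
          have h2 := add_left_cancel h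
          have h3 := cast_inj n _ _ (by omega) (by omega) h2
          omega
        exact (Finset.eq_of_subset_of_card_le hsub (by rw [hcard, hAcard])).symm
      have hparity : ∀ v ∈ A, φ n v = φ n u := by
        intro v hv
        rw [hA', Finset.mem_image] at hv
        obtain ⟨k, -, rfl⟩ := hv
        rw [map_add, map_natCast]
        have h0 : ((2*k : ℕ) : ZMod 2) = 0 := by
          rw [ZMod.natCast_eq_zero_iff]; exact ⟨k, rfl⟩
        rw [h0, add_zero]
      have hside2 : ∀ j : Fin n, ∀ a, a ≤ 1 → e j ∈ shiftM n a → (a : ZMod 2) = φ n u := by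
        intro j a ha hj
        rw [mem_shiftM] at hj
        obtain ⟨k, hk, hek⟩ := hj
        have hvS : s(((2*k+a : ℕ) : ZMod (2*n)), ((2*k+a : ℕ) : ZMod (2*n)) + 1) ∈ S := by
          rw [← hek, hS]
          exact Finset.mem_image_of_mem e (Finset.mem_univ j)
        have hvA := (hmemA _).mpr hvS
        have hp := hparity _ hvA
        rw [map_natCast] at hp
        have h2 : ((2*k+a : ℕ) : ZMod 2) = (a : ZMod 2) := by
          rw [ZMod.natCast_eq_natCast_iff]
          show (2*k+a) % 2 = a % 2
          omega
        rw [h2] at hp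
        exact hp
      have hzero_one : (0 : ZMod 2) ≠ 1 := by decide
      by_cases hphi : φ n u = 0
      · have hlt : ∀ j : Fin n, (f j : ℕ) < n - 1 := by
          intro j
          by_contra h
          have := hmem j
          simp only [h, if_false] at this
          have := hside2 j 1 le_rfl this
          rw [hphi] at this
          exact hzero_one (by simpa using this.symm)
        have ginj : Function.Injective (fun j : Fin n => (⟨(f j : ℕ), hlt j⟩ : Fin (n-1))) := by
          intro a b h
          simp only [Fin.mk.injEq] at h
          exact finj (Fin.ext h)
        have := Fintype.card_le_of_injective _ ginj
        simp only [Fintype.card_fin] at this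
        omega
      · have hge : ∀ j : Fin n, ¬ ((f j : ℕ) < n - 1) := by
          intro j h
          have := hmem j
          simp only [h, if_true] at this
          have := hside2 j 0 (by omega) this
          rw [Nat.cast_zero] at this
          exact hphi this.symm
        have ginj : Function.Injective
            (fun j : Fin n => (⟨(f j : ℕ) - (n-1), by have := (f j).2; omega⟩ : Fin (n-1))) := by
          intro a b h
          simp only [Fin.mk.injEq] at h
          have ha := hge a
          have hb := hge b
          exact finj (Fin.ext (by omega))
        have := Fintype.card_le_of_injective _ ginj
        simp only [Fintype.card_fin] at this
        omega
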